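/- Let H be a finite abelian group, k ≥ 1, 0 ≤ j ≤ k, and let a be an irreducible character of Equiv.Perm (Fin k). Then the restriction to H_j × H_{k−j} of the class function ζ_a on H_k decomposes as Res^{H_k}_{H_j × H_{k−j}}(ζ_a) = Σ_{b ∈ Irr(S_j)} Σ_{c ∈ Irr(S_{k−j})} c^a_{b,c} · (ζ_b ⊠ ζ_c), where c^a_{b,c} = ⟨a, Ind_{S_j × S_{k−j}}^{S_k}(b ⊠ c)⟩_{S_k} is the Littlewood–Richardson coefficient. -/

import Mathlib

open scoped Classical

noncomputable section

namespace BrGrFormal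

/-! ### The groups `H = (ZMod p)ˣ` and `G = ZMod p ⋊ (ZMod p)ˣ` -/

/-- The action of `(ZMod p)ˣ` on the (multiplicatively written) additive group `ZMod p`,
by multiplication. -/
def mulAction (p : ℕ) : (ZMod p)ˣ →* MulAut (Multiplicative (ZMod p)) where
  toFun u :=
    { toFun := fun z => Multiplicative.ofAdd (u • z.toAdd)
      invFun := fun z => Multiplicative.ofAdd (u⁻¹ • z.toAdd)
      left_inv := fun z => by simp
      right_inv := fun z => by simp
      map_mul' := fun z w => by simp [toAdd_mul, smul_add, ofAdd_add] }
  map_one' := by ext z; simp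
  map_mul' := fun u v => by ext z; simp [mul_smul]

/-- The group `G = ZMod p ⋊ (ZMod p)ˣ`. -/
abbrev Gp (p : ℕ) := Multiplicative (ZMod p) ⋊[mulAction p] (ZMod p)ˣ

instance {N G : Type*} [Group N] [Group G] {φ : G →* MulAut N} [Fintype N] [Fintype G] :
    Fintype (N ⋊[φ] G) :=
  Fintype.ofEquiv (N × G)
    { toFun := fun x => ⟨x.1, x.2⟩
      invFun := fun g => (g.left, g.right)
      left_inv := fun _ => rfl
      right_inv := fun _ => rfl }

/-! ### Characters -/

/-- `χ : G → ℂ` is an irreducible (complex) character of the group `G` if it is the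
character of some irreducible (simple) finite-dimensional complex representation of `G`. -/
def IsIrrChar (G : Type) [Group G] (χ : G → ℂ) : Prop :=
  ∃ V : FDRep ℂ G, CategoryTheory.Simple V ∧ χ = fun g => V.character g

/-- The usual inner product of class functions on a finite group. -/
def cfInner (Γ : Type) [Group Γ] [Fintype Γ] (u v : Γ → ℂ) : ℂ :=
  (Fintype.card Γ : ℂ)⁻¹ * ∑ g : Γ, u g * (starRingEnd ℂ) (v g)

/-- Induction of a class function along an (injective) group homomorphism `φ : K →* Γ`:
`Ind_K^Γ ψ (g) = |K|⁻¹ ∑_{x ∈ Γ} ∑_{y ∈ K, φ y = x⁻¹gx} ψ (y)`. -/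
def indHom {K Γ : Type} [Group K] [Fintype K] [Group Γ] [Fintype Γ]
    (φ : K →* Γ) (ψ : K → ℂ) : Γ → ℂ :=
  fun g => (Fintype.card K : ℂ)⁻¹ * ∑ x : Γ, ∑ y : K, if φ y = x⁻¹ * g * x then ψ y else 0

/-- Induction of a class function from a subgroup:
`Ind_K^Γ ψ (g) = |K|⁻¹ ∑_{x ∈ Γ, x⁻¹gx ∈ K} ψ (x⁻¹gx)`. -/
def indSub {Γ : Type} [Group Γ] [Fintype Γ] (K : Subgroup Γ) (ψ : Γ → ℂ) : Γ → ℂ :=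
  fun g => (Nat.card K : ℂ)⁻¹ * ∑ x : Γ, if x⁻¹ * g * x ∈ K then ψ (x⁻¹ * g * x) else 0

/-! ### Wreath products -/

/-- The permutation action on the base group of a wreath product. -/
def permAut (N : Type) [Group N] (k : ℕ) : Equiv.Perm (Fin k) →* MulAut (Fin k → N) where
  toFun σ :=
    { toFun := fun f => f ∘ σ.symm
      invFun := fun f => f ∘ σ
      left_inv := fun f => by ext j; simp
      right_inv := fun f => by ext j; simp
      map_mul' := fun f g => rfl }
  map_one' := by ext f j; rfl
  map_mul' := fun σ τ => by ext f j; rfl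

/-- The wreath product `N ≀ S_k`. -/
abbrev Wr (N : Type) [Group N] (k : ℕ) := (Fin k → N) ⋊[permAut N k] Equiv.Perm (Fin k)

/-- The map between wreath products induced by a homomorphism of base groups. -/
def wrMap {N M : Type} [Group N] [Group M] (ν : N →* M) (k : ℕ) : Wr N k →* Wr M k where
  toFun g := ⟨fun j => ν (g.left j), g.right⟩
  map_one' := by ext j <;> simp [permAut]
  map_mul' := fun a b => by ext j <;> simp [permAut, -SemidirectProduct.mk_eq_inl_mul_inr] <;> rfl

/-- The set of minimal representatives of the orbits (cycles) of a permutation;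
its cardinality is the number `c(π)` of orbits of `π`, fixed points included. -/
def orbitReps {k : ℕ} (π : Equiv.Perm (Fin k)) : Finset (Fin k) :=
  Finset.univ.filter fun x => ∀ y : Fin k, π.SameCycle x y → x ≤ y

/-- The orbit of `x` under (the cyclic group generated by) `π`, as a finset. -/
def orbitOf {k : ℕ} (π : Equiv.Perm (Fin k)) (x : Fin k) : Finset (Fin k) :=
  Finset.univ.filter fun y => π.SameCycle x y

/-- The cycle product `f j * f (π⁻¹ j) * ⋯ * f (π^{-(m-1)} j)` of `(f ; π)` along the
orbit of `j`, where `m` is the cardinality of this orbit. -/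
def cycleProd {N : Type} [Group N] {k : ℕ} (f : Fin k → N) (π : Equiv.Perm (Fin k))
    (j : Fin k) : N :=
  (((List.range (orbitOf π j).card)).map fun t => f ((π ^ t)⁻¹ j)).prod

/-- The class function `ψ̃^k` on `N ≀ S_k` attached to a class function `ψ` on `N`:
`(f ; π) ↦ ∏_{orbits O of π} ψ (cycle product of (f;π) along O)`. -/
def cycleCF {N : Type} [Group N] {k : ℕ} (ψ : N → ℂ) : Wr N k → ℂ :=
  fun g => ∏ x ∈ orbitReps g.right, ψ (cycleProd g.left g.right x)

/-- The linear character `ψ̃^k : (f;π) ↦ ∏_j ψ (f j)` of `N ≀ S_k` attached to a linear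
character `ψ` of `N`. -/
def prodCF {N : Type} [Group N] {k : ℕ} (ψ : N → ℂ) : Wr N k → ℂ :=
  fun g => ∏ j, ψ (g.left j)

/-- The linear character `θ̃^k : (f;π) ↦ θ (∏_j f j)` of `N ≀ S_k` attached to a linear
character `θ` of an abelian group `N`; it coincides with `prodCF θ`. -/
def thetaTilde {N : Type} [CommGroup N] {k : ℕ} (θ : N → ℂ) : Wr N k → ℂ :=
  fun g => θ (∏ j, g.left j)

/-- The class function `(f;π) ↦ a (π)` on `N ≀ S_k` attached to a class function `a`
on `S_k` (denoted `φ_a`, resp. `ζ_a`, in the paper). -/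
def permCF {N : Type} [Group N] {k : ℕ} (a : Equiv.Perm (Fin k) → ℂ) : Wr N k → ℂ :=
  fun g => a g.right

/-! ### Block (Young-type) embeddings -/

/-- Conjugation of permutations by an equivalence, as a group homomorphism. -/
def permCongrHom {α β : Type} (e : α ≃ β) : Equiv.Perm α →* Equiv.Perm β where
  toFun σ := e.permCongr σ
  map_one' := by ext x; simp
  map_mul' := fun σ τ => by ext x; simp

/-- The embedding `S_{j₁} × S_{j₂} →* S_k` determined by an identification
`E : Fin j₁ ⊕ Fin j₂ ≃ Fin k`. -/
def permSumEmb {j₁ j₂ k : ℕ} (E : Fin j₁ ⊕ Fin j₂ ≃ Fin k) :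
    Equiv.Perm (Fin j₁) × Equiv.Perm (Fin j₂) →* Equiv.Perm (Fin k) :=
  (permCongrHom E).comp (Equiv.Perm.sumCongrHom (Fin j₁) (Fin j₂))

/-- The embedding `∏ i, S_{k i} →* S_w` determined by an identification
`E : (Σ i, Fin (k i)) ≃ Fin w`. -/
def permSigmaEmb {ι : Type} [Fintype ι] [DecidableEq ι] {k : ι → ℕ} {w : ℕ}
    (E : (Σ i, Fin (k i)) ≃ Fin w) :
    (∀ i, Equiv.Perm (Fin (k i))) →* Equiv.Perm (Fin w) :=
  (permCongrHom E).comp (Equiv.Perm.sigmaCongrRightHom fun i => Fin (k i))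

private lemma permCongr_symm_eq {α β : Type} (e : α ≃ β) (p : Equiv.Perm α) :
    (e.permCongr p).symm = e.permCongr p.symm := rfl

/-- The embedding `(N ≀ S_{j₁}) × (N ≀ S_{j₂}) →* N ≀ S_k` determined by an
identification `E : Fin j₁ ⊕ Fin j₂ ≃ Fin k`. -/
def wrSumEmb {N : Type} [Group N] {j₁ j₂ k : ℕ} (E : Fin j₁ ⊕ Fin j₂ ≃ Fin k) :
    Wr N j₁ × Wr N j₂ →* Wr N k where
  toFun x := ⟨fun t => Sum.elim x.1.left x.2.left (E.symm t),
              permSumEmb E (x.1.right, x.2.right)⟩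
  map_one' := by
    ext t
    · rcases h : E.symm t with s | s <;> simp [h]
    · simp [permSumEmb, permCongrHom]
  map_mul' := fun a b => by
    ext t
    · rw [SemidirectProduct.mul_left]
      simp only [SemidirectProduct.mul_left, permAut, permSumEmb, permCongrHom,
        Equiv.Perm.sumCongrHom, MonoidHom.coe_comp, MonoidHom.coe_mk, OneHom.coe_mk,
        Function.comp_apply, Pi.mul_apply, MulEquiv.coe_mk, Equiv.coe_fn_mk,
        MonoidHom.comp_apply, Equiv.Perm.inv_def, permCongr_symm_eq,
        Equiv.permCongr_apply, Equiv.symm_apply_apply]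
      rcases h : E.symm t with s | s <;> simp [h, -SemidirectProduct.mk_eq_inl_mul_inr] <;> rfl
    · simp only [SemidirectProduct.mul_right, Prod.fst_mul, Prod.snd_mul,
        ← Prod.mk_mul_mk, map_mul]

/-- The embedding `∏ i, (N ≀ S_{k i}) →* N ≀ S_w` determined by an identification
`E : (Σ i, Fin (k i)) ≃ Fin w`. -/
def wrSigmaEmb {N : Type} [Group N] {ι : Type} [Fintype ι] [DecidableEq ι] {k : ι → ℕ}
    {w : ℕ} (E : (Σ i, Fin (k i)) ≃ Fin w) : (∀ i, Wr N (k i)) →* Wr N w where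
  toFun x := ⟨fun t => (x (E.symm t).1).left (E.symm t).2,
              permSigmaEmb E fun i => (x i).right⟩
  map_one' := by
    refine SemidirectProduct.ext ?_ ?_
    · funext t; simp
    · show (permSigmaEmb E fun i => (1 : Wr N (k i)).right) = (1 : Wr N w).right
      have h1 : (fun i => (1 : Wr N (k i)).right) = (1 : ∀ i, Equiv.Perm (Fin (k i))) := rfl
      rw [h1, map_one]
      rfl
  map_mul' := fun a b => by
    refine SemidirectProduct.ext ?_ ?_
    · simp only [SemidirectProduct.mul_left]
      funext t
      simp only [SemidirectProduct.mul_left, permAut, permSigmaEmb, permCongrHom,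
        Equiv.Perm.sigmaCongrRightHom, MonoidHom.coe_comp, MonoidHom.coe_mk, OneHom.coe_mk,
        Function.comp_apply, Pi.mul_apply, MulEquiv.coe_mk, Equiv.coe_fn_mk,
        MonoidHom.comp_apply, Equiv.Perm.inv_def, permCongr_symm_eq,
        Equiv.permCongr_apply, Equiv.sigmaCongrRight_symm,
        Equiv.sigmaCongrRight_apply]
      exact congrArg ((a (E.symm t).1).left (E.symm t).2 * ·)
        (congrArg (fun z : (Σ i, Fin (k i)) => (b z.1).left z.2) 
          (E.symm_apply_apply
            ((Equiv.sigmaCongrRight fun i => Equiv.symm (a i).right) (E.symm t))).symm)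
    · show (permSigmaEmb E fun i => ((a * b) i).right) = _
      have h1 : (fun i => ((a * b) i).right)
          = (fun i => (a i).right) * (fun i => (b i).right) := by
        funext i; simp
      rw [h1, map_mul]
      rfl

end BrGrFormal
namespace BrGrFormal

/-! ### Auxiliary character-theoretic machinery -/

open Module LinearMap CategoryTheory in
private lemma trace_conj_aux {V : Type} [AddCommGroup V] [Module ℂ V] [FiniteDimensional ℂ V]
    (u w : Module.End ℂ V) (n : ℕ) (hn : n ≠ 0) (hun : u ^ n = 1)
    (_huw : u * w = 1) (hwu : w * u = 1) :
    (starRingEnd ℂ) (LinearMap.trace ℂ V u) = LinearMap.trace ℂ V w := by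
  have hsq : Squarefree (Polynomial.X ^ n - 1 : Polynomial ℂ) := by
    have := Polynomial.separable_X_pow_sub_C (1 : ℂ)
      (by exact_mod_cast Nat.cast_ne_zero.mpr hn) one_ne_zero
    simpa using this.squarefree
  have hss : u.IsSemisimple := by
    apply Module.End.isSemisimple_of_squarefree_aeval_eq_zero hsq
    simp [hun]
  have heig : ∀ μ : ℂ, u.maxGenEigenspace μ = u.eigenspace μ :=
    fun μ => hss.isFinitelySemisimple.maxGenEigenspace_eq_eigenspace μ
  have htop : ⨆ μ : ℂ, u.eigenspace μ = ⊤ := by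
    have := Module.End.iSup_maxGenEigenspace_eq_top u
    simpa [heig] using this
  have hint : DirectSum.IsInternal (fun μ : ℂ => u.eigenspace μ) :=
    DirectSum.isInternal_submodule_of_iSupIndep_of_iSup_eq_top
      u.eigenspaces_iSupIndep htop
  have hfin : {μ : ℂ | u.eigenspace μ ≠ ⊥}.Finite := by
    have := u.finite_hasEigenvalue
    convert this using 1
    ext μ; exact Module.End.hasEigenvalue_iff.symm
  have hwx : ∀ (μ : ℂ), μ ≠ 0 → ∀ x ∈ u.eigenspace μ, w x = μ⁻¹ • x := by
    intro μ hμ x hx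
    rw [Module.End.mem_eigenspace_iff] at hx
    have h1 : w (u x) = x := by simpa using LinearMap.congr_fun hwu x
    rw [hx, map_smul] at h1
    rw [eq_inv_smul_iff₀ hμ]; exact h1
  have hmapu : ∀ μ : ℂ, Set.MapsTo u (u.eigenspace μ) (u.eigenspace μ) := by
    intro μ x hx
    simp only [SetLike.mem_coe, Module.End.mem_eigenspace_iff] at hx ⊢
    rw [hx, map_smul, hx]
  have hmapw : ∀ μ : ℂ, Set.MapsTo w (u.eigenspace μ) (u.eigenspace μ) := by
    intro μ x hx
    simp only [SetLike.mem_coe] at hx ⊢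
    rcases eq_or_ne μ 0 with rfl | hμ
    · rw [Module.End.mem_eigenspace_iff] at hx ⊢
      have hx0 : u x = 0 := by simpa using hx
      have : x = 0 := by
        have h1 : w (u x) = x := by simpa using LinearMap.congr_fun hwu x
        rw [hx0, map_zero] at h1; exact h1.symm
      simp [this]
    · rw [Module.End.mem_eigenspace_iff]
      rw [hwx μ hμ x hx, Module.End.mem_eigenspace_iff] at *
      rw [map_smul, hx, smul_comm]
  have hroot : ∀ μ : ℂ, u.eigenspace μ ≠ ⊥ → μ ^ n = 1 ∧ μ ≠ 0 := by
    intro μ hμ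
    obtain ⟨x, hx, hx0⟩ := Submodule.exists_mem_ne_zero_of_ne_bot hμ
    rw [Module.End.mem_eigenspace_iff] at hx
    have hpow : ∀ m : ℕ, (u ^ m) x = μ ^ m • x := by
      intro m
      induction m with
      | zero => simp
      | succ m ih =>
        rw [pow_succ, Module.End.mul_apply, hx, map_smul, ih, smul_smul, ← pow_succ']
    have h1 : μ ^ n • x = x := by
      have := hpow n; rw [hun] at this; simpa using this.symm
    have hμn : μ ^ n = 1 := by
      by_contra h
      have h5 : (μ ^ n - 1) • x = 0 := by
        rw [sub_smul, h1, one_smul, sub_self]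
      exact hx0 ((smul_eq_zero.mp h5).resolve_left (sub_ne_zero.mpr h))
    refine ⟨hμn, fun h => ?_⟩
    rw [h] at hμn; simp [zero_pow hn] at hμn
  rw [LinearMap.trace_eq_sum_trace_restrict' hint hfin hmapu,
    LinearMap.trace_eq_sum_trace_restrict' hint hfin hmapw, map_sum]
  refine Finset.sum_congr rfl fun μ hμ => ?_
  have hμmem : u.eigenspace μ ≠ ⊥ := by simpa using hμ
  obtain ⟨hμn, hμ0⟩ := hroot μ hμmem
  have hru : u.restrict (hmapu μ) = (μ : ℂ) • (1 : Module.End ℂ (u.eigenspace μ)) := by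
    ext ⟨x, hx⟩
    rw [Module.End.mem_eigenspace_iff] at hx
    simp [LinearMap.restrict_apply, hx]
    exact hx
  have hrw : w.restrict (hmapw μ) = (μ⁻¹ : ℂ) • (1 : Module.End ℂ (u.eigenspace μ)) := by
    ext ⟨x, hx⟩
    simp [LinearMap.restrict_apply, hwx μ hμ0 x hx]
    exact hwx μ hμ0 x hx
  have td : ∀ c : ℂ, LinearMap.trace ℂ (u.eigenspace μ) (c • (1 : Module.End ℂ (u.eigenspace μ)))
      = c * (finrank ℂ (u.eigenspace μ) : ℂ) := by
    intro c
    rw [map_smul, LinearMap.trace_one]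
    simp [smul_eq_mul]
  rw [hru, hrw, td, td, map_mul, Complex.conj_natCast]
  congr 1
  have habs : μ * (starRingEnd ℂ) μ = 1 := by
    have h3 : μ * (starRingEnd ℂ) μ = (Complex.normSq μ : ℂ) := by
      rw [Complex.mul_conj]
    have h2 : (Complex.normSq μ : ℝ) ^ n = 1 := by
      have h2' : (μ * (starRingEnd ℂ) μ) ^ n = 1 := by
        rw [mul_pow, ← map_pow, hμn, map_one, mul_one]
      rw [h3] at h2'
      exact_mod_cast h2'
    have hnn : (0:ℝ) ≤ Complex.normSq μ := Complex.normSq_nonneg μ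
    have h4 : Complex.normSq μ = 1 := by
      rcases lt_trichotomy (Complex.normSq μ) 1 with h | h | h
      · exfalso
        have := pow_lt_one₀ hnn h hn
        rw [h2] at this; exact lt_irrefl 1 this
      · exact h
      · exfalso
        have := one_lt_pow₀ h hn
        rw [h2] at this; exact lt_irrefl 1 this
    rw [h3, h4]; norm_num
  exact (inv_eq_of_mul_eq_one_right habs).symm

private lemma conj_character {G : Type} [Group G] [Fintype G] (V : FDRep ℂ G) (g : G) :
    (starRingEnd ℂ) (V.character g) = V.character g⁻¹ := by
  apply trace_conj_aux (V.ρ g) (V.ρ g⁻¹) (Fintype.card G) Fintype.card_ne_zero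
  · rw [← map_pow, pow_card_eq_one, map_one]
  · rw [← map_mul, mul_inv_cancel, map_one]
  · rw [← map_mul, inv_mul_cancel, map_one]

/-- restriction of a representation to an invariant subspace -/
private def subRep {G : Type} [Group G] (Y : FDRep ℂ G) (p : Submodule ℂ Y)
    (hp : ∀ g : G, ∀ x ∈ p, Y.ρ g x ∈ p) : FDRep ℂ G :=
  FDRep.of (V := ↥p)
    { toFun := fun g => (Y.ρ g).restrict (fun x hx => hp g x hx)
      map_one' := by ext x; simp [LinearMap.restrict_apply]
      map_mul' := fun g h => by ext x; simp [LinearMap.restrict_apply] }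

private def subRepIncl {G : Type} [Group G] (Y : FDRep ℂ G) (p : Submodule ℂ Y)
    (hp : ∀ g : G, ∀ x ∈ p, Y.ρ g x ∈ p) : subRep Y p hp ⟶ Y where
  hom := FGModuleCat.ofHom p.subtype
  comm := fun g => by ext x; rfl

open CategoryTheory in
private lemma simple_of_invariant {G : Type} [Group G] (X : FDRep ℂ G) (hnt : ∃ v : X, v ≠ 0)
    (hdi : ∀ q : Submodule ℂ X, (∀ g : G, ∀ x ∈ q, X.ρ g x ∈ q) → q = ⊥ ∨ q = ⊤) :
    Simple X := by
  constructor
  intro Y f hm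
  constructor
  · intro hiso hf0
    obtain ⟨v, hv⟩ := hnt
    obtain ⟨w, hw1, hw2⟩ := hiso.out
    rw [hf0, Limits.comp_zero] at hw2
    have h2 : ((𝟙 X : X ⟶ X).hom.hom.hom : X →ₗ[ℂ] X) v = ((0 : X ⟶ X).hom.hom.hom : X →ₗ[ℂ] X) v := by
      rw [← hw2]
    simp at h2
    exact hv h2
  · intro hf0
    set ψ : Y →ₗ[ℂ] X := (f.hom.hom.hom : Y →ₗ[ℂ] X) with hψ
    have hker : ∀ g : G, ∀ x ∈ LinearMap.ker ψ, Y.ρ g x ∈ LinearMap.ker ψ := by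
      intro g x hx
      rw [LinearMap.mem_ker] at hx ⊢
      have hc : ∀ y : Y, ψ (Y.ρ g y) = X.ρ g (ψ y) := by
        intro y
        have := f.comm g
        exact congrFun (congrArg (fun (h : Y.V ⟶ X.V) => (h.hom.hom : Y →ₗ[ℂ] X).toFun) this) y
      rw [hc, hx, map_zero]
    have hinj : Function.Injective ψ := by
      rw [← LinearMap.ker_eq_bot]
      have hcomp : subRepIncl Y _ hker ≫ f = (0 : subRep Y _ hker ⟶ Y) ≫ f := by
        rw [Limits.zero_comp]
        ext x
        exact x.2
      have h0' := (cancel_mono f).mp hcomp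
      rw [eq_bot_iff]
      intro x hx
      have : (subRepIncl Y _ hker).hom ⟨x, hx⟩ =
          ((0 : subRep Y _ hker ⟶ Y).hom.hom.hom : subRep Y _ hker →ₗ[ℂ] Y) ⟨x, hx⟩ := by
        rw [h0']; rfl
      exact this
    have hsur : Function.Surjective ψ := by
      have hr : ∀ g : G, ∀ x ∈ LinearMap.range ψ, X.ρ g x ∈ LinearMap.range ψ := by
        rintro g x ⟨y, rfl⟩
        refine ⟨Y.ρ g y, ?_⟩
        have := f.comm g
        exact congrFun (congrArg (fun (h : Y.V ⟶ X.V) => (h.hom.hom : Y →ₗ[ℂ] X).toFun) this) y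
      rcases hdi _ hr with h | h
      · exfalso
        apply hf0
        ext y
        have : ψ y ∈ LinearMap.range ψ := ⟨y, rfl⟩
        rw [h] at this
        simpa using this
      · rw [← LinearMap.range_eq_top, h]
    let e : Y ≃ₗ[ℂ] X := LinearEquiv.ofBijective ψ ⟨hinj, hsur⟩
    have hcomm : ∀ g : G, ∀ x : X, (e.symm : X →ₗ[ℂ] Y) (X.ρ g x) = Y.ρ g (e.symm x) := by
      intro g x
      apply hinj
      have hc : ∀ y : Y, ψ (Y.ρ g y) = X.ρ g (ψ y) := by
        intro y
        have := f.comm g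
        exact congrFun (congrArg (fun (h : Y.V ⟶ X.V) => (h.hom.hom : Y →ₗ[ℂ] X).toFun) this) y
      have h1 : ψ ((e.symm : X →ₗ[ℂ] Y) (X.ρ g x)) = X.ρ g x := e.apply_symm_apply _
      have h2 : ψ (Y.ρ g (e.symm x)) = X.ρ g (ψ (e.symm x)) := hc _
      have h3 : ψ (e.symm x) = x := e.apply_symm_apply x
      rw [h1, h2, h3]
    refine ⟨⟨⟨FGModuleCat.ofHom (e.symm : X →ₗ[ℂ] Y), fun g => ?_⟩, ?_, ?_⟩⟩
    · ext x
      exact hcomm g x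
    · ext y
      show (e.symm : X →ₗ[ℂ] Y) (ψ y) = y
      exact e.symm_apply_apply y
    · ext x
      show ψ ((e.symm : X →ₗ[ℂ] Y) x) = x
      exact e.apply_symm_apply x

set_option maxHeartbeats 1000000 in
open Module LinearMap CategoryTheory in
private lemma completeness {G : Type} [Group G] [Fintype G] (f : G → ℂ)
    (hf : ∀ s t : G, f (s * t * s⁻¹) = f t)
    (h0 : ∀ b : G → ℂ, IsIrrChar G b → cfInner G f b = 0) : f = 0 := by
  haveI : NeZero ((Fintype.card G : ℂ)) := ⟨Nat.cast_ne_zero.mpr Fintype.card_ne_zero⟩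
  haveI : FiniteDimensional ℂ (MonoidAlgebra ℂ G) :=
    Module.Finite.equiv ((MonoidAlgebra.coeffLinearEquiv ℂ).trans (Finsupp.linearEquivFunOnFinite ℂ ℂ G)).symm
  set z : (MonoidAlgebra ℂ G) := ∑ g : G, f g⁻¹ • (MonoidAlgebra.of ℂ G g) with hzdef
  -- z is central
  have hzof : ∀ h : G, z * (MonoidAlgebra.of ℂ G h) = (MonoidAlgebra.of ℂ G h) * z := by
    intro h
    rw [hzdef, Finset.sum_mul, Finset.mul_sum]
    simp only [smul_mul_assoc, mul_smul_comm, ← map_mul]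
    apply Fintype.sum_equiv (MulAut.conj h⁻¹).toEquiv
    intro g
    simp only [MulAut.conj_apply, MulEquiv.toEquiv_eq_coe, MulEquiv.coe_toEquiv]
    have h1 : (h⁻¹ * g * h⁻¹⁻¹)⁻¹ = h⁻¹ * g⁻¹ * (h⁻¹)⁻¹ := by group
    have h2 : h * (h⁻¹ * g * h⁻¹⁻¹) = g * h := by group
    rw [h1, h2, hf h⁻¹ g⁻¹]
  have hz : ∀ a : (MonoidAlgebra ℂ G), z * a = a * z := by
    intro a
    induction a using MonoidAlgebra.induction_on with
    | of g => exact hzof g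
    | add a b ha hb => rw [mul_add, add_mul, ha, hb]
    | smul r a ha => rw [mul_smul_comm, smul_mul_assoc, ha]
  -- z annihilates every simple submodule of the monoid algebra
  have hann : ∀ S : Submodule (MonoidAlgebra ℂ G) (MonoidAlgebra ℂ G), IsSimpleModule (MonoidAlgebra ℂ G) S → ∀ x ∈ S, z * x = 0 := by
    intro S hS x hxS
    haveI := hS
    haveI : Nontrivial S := IsSimpleModule.nontrivial (MonoidAlgebra ℂ G) S
    set Sc : Submodule ℂ (MonoidAlgebra ℂ G) := S.restrictScalars ℂ with hScdef
    have hmem : ∀ (g : G) (y : (MonoidAlgebra ℂ G)), y ∈ Sc → MonoidAlgebra.of ℂ G g * y ∈ Sc := by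
      intro g y hy
      have : MonoidAlgebra.of ℂ G g • y ∈ S := S.smul_mem _ hy
      exact (Submodule.restrictScalars_mem ℂ S _).mpr (by simpa [smul_eq_mul] using this)
    set ρ : Representation ℂ G Sc :=
      { toFun := fun g =>
          { toFun := fun x => ⟨MonoidAlgebra.of ℂ G g * x.1, hmem g x.1 x.2⟩
            map_add' := fun x y => by apply Subtype.ext; simp [mul_add]
            map_smul' := fun c x => by apply Subtype.ext; simp [Algebra.mul_smul_comm] }
        map_one' := by ext x; simp
        map_mul' := fun g h => by ext x; simp [mul_assoc] } with hρdef
    set VS : FDRep ℂ G := FDRep.of ρ with hVSdef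
    -- dichotomy for invariant subspaces
    have hdi : ∀ q : Submodule ℂ Sc, (∀ g : G, ∀ v ∈ q, ρ g v ∈ q) → q = ⊥ ∨ q = ⊤ := by
      intro q hq
      set q' : Submodule ℂ (MonoidAlgebra ℂ G) := q.map Sc.subtype with hq'def
      have hq'mul : ∀ a : (MonoidAlgebra ℂ G), ∀ y ∈ q', a * y ∈ q' := by
        intro a
        induction a using MonoidAlgebra.induction_on with
        | of g =>
          rintro y ⟨v, hv, rfl⟩
          exact ⟨ρ g v, hq g v hv, rfl⟩
        | add a b ha hb =>
          intro y hy
          rw [add_mul]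
          exact q'.add_mem (ha y hy) (hb y hy)
        | smul r a ha =>
          intro y hy
          rw [smul_mul_assoc]
          exact q'.smul_mem r (ha y hy)
      set Q : Submodule (MonoidAlgebra ℂ G) S :=
        { carrier := {x : S | (x : (MonoidAlgebra ℂ G)) ∈ q'}
          add_mem' := fun {a b} ha hb => q'.add_mem ha hb
          zero_mem' := q'.zero_mem
          smul_mem' := fun a x hx => by
            show ((a • x : S) : (MonoidAlgebra ℂ G)) ∈ q'
            have : ((a • x : S) : (MonoidAlgebra ℂ G)) = a * (x : (MonoidAlgebra ℂ G)) := rfl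
            rw [this]
            exact hq'mul a _ hx } with hQdef
      rcases eq_bot_or_eq_top Q with h | h
      · left
        rw [eq_bot_iff]
        intro v hv
        have hv1 : (v : (MonoidAlgebra ℂ G)) ∈ S := (Submodule.restrictScalars_mem ℂ S _).mp v.2
        have hvQ : (⟨(v : (MonoidAlgebra ℂ G)), hv1⟩ : S) ∈ Q := ⟨v, hv, rfl⟩
        rw [h] at hvQ
        have : (v : (MonoidAlgebra ℂ G)) = 0 := by
          simpa using congrArg (Subtype.val) (Submodule.mem_bot _ |>.mp hvQ)
        simpa [Submodule.mem_bot] using Subtype.ext this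
      · right
        rw [eq_top_iff]
        intro v _
        have hv1 : (v : (MonoidAlgebra ℂ G)) ∈ S := (Submodule.restrictScalars_mem ℂ S _).mp v.2
        have hvQ : (⟨(v : (MonoidAlgebra ℂ G)), hv1⟩ : S) ∈ Q := h ▸ Submodule.mem_top
        obtain ⟨w, hw, hweq⟩ := hvQ
        have : w = v := Subtype.ext hweq
        rwa [this] at hw
    -- VS is a simple representation
    haveI : Nontrivial Sc := by
      obtain ⟨x, hx⟩ := exists_ne (0 : S)
      refine ⟨⟨(x : (MonoidAlgebra ℂ G)), (Submodule.restrictScalars_mem ℂ S _).mpr x.2⟩, 0, fun h => hx ?_⟩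
      have : (x : (MonoidAlgebra ℂ G)) = 0 := congrArg Subtype.val h
      exact Subtype.ext this
    have hnt : ∃ v : VS, v ≠ 0 := by
      obtain ⟨v, hv⟩ := exists_ne (0 : Sc)
      exact ⟨v, hv⟩
    have hsimple : Simple VS := simple_of_invariant VS hnt hdi
    -- the action of z on Sc
    have hmemz : ∀ y : (MonoidAlgebra ℂ G), y ∈ Sc → z * y ∈ Sc := by
      intro y hy
      have : z • y ∈ S := S.smul_mem _ hy
      exact (Submodule.restrictScalars_mem ℂ S _).mpr (by simpa [smul_eq_mul] using this)
    set L : Module.End ℂ Sc :=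
      { toFun := fun x => ⟨z * x.1, hmemz x.1 x.2⟩
        map_add' := fun x y => by apply Subtype.ext; simp [mul_add]
        map_smul' := fun c x => by apply Subtype.ext; simp [Algebra.mul_smul_comm] } with hLdef
    obtain ⟨c, hcev⟩ := Module.End.exists_eigenvalue L
    have hinv : ∀ g : G, ∀ v ∈ L.eigenspace c, ρ g v ∈ L.eigenspace c := by
      intro g v hv
      rw [Module.End.mem_eigenspace_iff] at hv ⊢
      have h1 : L (ρ g v) = ρ g (L v) := by
        apply Subtype.ext
        show z * (MonoidAlgebra.of ℂ G g * v.1) = MonoidAlgebra.of ℂ G g * (z * v.1)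
        rw [← mul_assoc, hz, mul_assoc]
      rw [h1, hv, map_smul]
    have hne : L.eigenspace c ≠ ⊥ := hcev
    have heig : L.eigenspace c = ⊤ := (hdi (L.eigenspace c) hinv).resolve_left hne
    have hL : ∀ x : Sc, L x = c • x := by
      intro x
      have : x ∈ L.eigenspace c := heig ▸ Submodule.mem_top
      exact Module.End.mem_eigenspace_iff.mp this
    -- trace computations
    have htr1 : LinearMap.trace ℂ Sc L = c * (finrank ℂ Sc : ℂ) := by
      have : L = c • (1 : Module.End ℂ Sc) := by
        ext x; rw [hL x]; rfl
      rw [this, map_smul, LinearMap.trace_one, smul_eq_mul]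
    have htr2 : LinearMap.trace ℂ Sc L = ∑ g : G, f g⁻¹ * VS.character g := by
      have hdecomp : L = ∑ g : G, f g⁻¹ • (ρ g : Module.End ℂ Sc) := by
        refine LinearMap.ext fun x => Subtype.ext ?_
        show z * x.1 = _
        rw [hzdef, Finset.sum_mul]
        rw [LinearMap.sum_apply]
        rw [AddSubmonoidClass.coe_finset_sum]
        refine Finset.sum_congr rfl fun g _ => ?_
        rw [smul_mul_assoc]
        rfl
      rw [hdecomp, map_sum]
      refine Finset.sum_congr rfl fun g _ => ?_
      rw [map_smul, smul_eq_mul]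
      rfl
    -- the character inner product vanishes
    have hb : IsIrrChar G (fun g => VS.character g) := ⟨VS, hsimple, rfl⟩
    have h00 := h0 _ hb
    rw [cfInner] at h00
    have hcard : ((Fintype.card G : ℂ))⁻¹ ≠ 0 := inv_ne_zero (NeZero.ne _)
    have hsum : ∑ g : G, f g * (starRingEnd ℂ) (VS.character g) = 0 := by
      rcases mul_eq_zero.mp h00 with h | h
      · exact absurd h hcard
      · exact h
    have hsum2 : ∑ g : G, f g⁻¹ * VS.character g = 0 := by
      rw [← hsum]
      apply Fintype.sum_equiv (Equiv.inv G)
      intro g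
      simp only [Equiv.inv_apply]
      rw [conj_character, inv_inv]
    -- conclude c = 0 and hence z acts as zero
    have hc0 : c = 0 := by
      have h1 : c * (finrank ℂ Sc : ℂ) = 0 := by rw [← htr1, htr2, hsum2]
      have hfr : ((finrank ℂ Sc : ℕ) : ℂ) ≠ 0 :=
        Nat.cast_ne_zero.mpr (Module.finrank_pos (R := ℂ) (M := Sc)).ne'
      exact (mul_eq_zero.mp h1).resolve_right hfr
    have hfin : L ⟨x, (Submodule.restrictScalars_mem ℂ S _).mpr hxS⟩ = 0 := by
      rw [hL, hc0, zero_smul]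
    exact congrArg Subtype.val hfin
  -- z is zero
  have hz0 : z = 0 := by
    set TT : Submodule (MonoidAlgebra ℂ G) (MonoidAlgebra ℂ G) :=
      { carrier := {x | z * x = 0}
        add_mem' := fun {a b} ha hb => by
          show z * (a + b) = 0
          rw [mul_add, ha, hb, add_zero]
        zero_mem' := mul_zero z
        smul_mem' := fun a x hx => by
          show z * (a • x) = 0
          rw [smul_eq_mul, ← mul_assoc, hz a, mul_assoc, hx, mul_zero] } with hTTdef
    have htop : (⊤ : Submodule (MonoidAlgebra ℂ G) (MonoidAlgebra ℂ G)) ≤ TT := by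
      rw [← IsSemisimpleModule.sSup_simples_eq_top (MonoidAlgebra ℂ G) (MonoidAlgebra ℂ G)]
      apply sSup_le
      intro S hS
      intro y hy
      exact hann S hS y hy
    have h1 : (1 : (MonoidAlgebra ℂ G)) ∈ TT := htop Submodule.mem_top
    have : z * 1 = 0 := h1
    rwa [mul_one] at this
  -- read off the coefficients
  ext g₀
  have heval : ∀ g : G, (f g⁻¹ • MonoidAlgebra.of ℂ G g).coeff g₀⁻¹
      = if g = g₀⁻¹ then f g⁻¹ else 0 := by
    intro g
    rw [MonoidAlgebra.coeff_smul_apply, MonoidAlgebra.of_apply, MonoidAlgebra.coeff_single,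
      Finsupp.single_apply, smul_eq_mul]
    split_ifs <;> simp
  have h1 : z.coeff g₀⁻¹ = 0 := by rw [hz0]; rfl
  rw [hzdef, MonoidAlgebra.coeff_sum, Finset.sum_apply'] at h1
  rw [Finset.sum_congr rfl (fun g _ => heval g)] at h1
  rw [Finset.sum_ite_eq' Finset.univ g₀⁻¹ (fun g => f g⁻¹)] at h1
  simpa using h1


open CategoryTheory in
private lemma char_orthonormal' {G : Type} [Group G] [Fintype G] (V W : FDRep ℂ G)
    [Simple V] [Simple W] :
    (Fintype.card G : ℂ)⁻¹ * ∑ g : G, V.character g * W.character g⁻¹ =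
      if Nonempty (V ≅ W) then 1 else 0 := by
  letI : Invertible ((Nat.card G : ℂ)) :=
    invertibleOfNonzero (Nat.cast_ne_zero.mpr Nat.card_pos.ne')
  have h := FDRep.char_orthonormal (k := ℂ) (G := G) V W
  rw [Nat.card_eq_fintype_card] at h
  exact h

open CategoryTheory in
private lemma irr_inner {G : Type} [Group G] [Fintype G] (b b' : G → ℂ)
    (hb : IsIrrChar G b) (hb' : IsIrrChar G b') :
    cfInner G b b' = if b = b' then 1 else 0 := by
  by_cases h : b = b'
  · subst h
    obtain ⟨V, hV, rfl⟩ := hb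
    haveI := hV
    rw [if_pos rfl, cfInner]
    have h1 : ∀ g : G, V.character g * (starRingEnd ℂ) (V.character g)
        = V.character g * V.character g⁻¹ := fun g => by rw [conj_character]
    rw [Finset.sum_congr rfl fun g _ => h1 g, char_orthonormal' V V,
      if_pos ⟨Iso.refl V⟩]
  · obtain ⟨V, hV, rfl⟩ := hb
    obtain ⟨W, hW, rfl⟩ := hb'
    haveI := hV; haveI := hW
    rw [if_neg h, cfInner]
    have h1 : ∀ g : G, V.character g * (starRingEnd ℂ) (W.character g)
        = V.character g * W.character g⁻¹ := fun g => by rw [conj_character]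
    rw [Finset.sum_congr rfl fun g _ => h1 g, char_orthonormal' V W, if_neg]
    rintro ⟨i⟩
    exact h (by rw [FDRep.char_iso i])

private lemma irrChar_conj {G : Type} [Group G] (b : G → ℂ) (hb : IsIrrChar G b) :
    ∀ s t : G, b (s * t * s⁻¹) = b t := by
  obtain ⟨V, -, rfl⟩ := hb
  intro s t
  exact FDRep.char_conj V t s

/-- Frobenius reciprocity for our bespoke induction. -/
private lemma frobenius {K Γ : Type} [Group K] [Fintype K] [Group Γ] [Fintype Γ] (φ : K →* Γ)
    (a : Γ → ℂ) (ha : ∀ s t : Γ, a (s * t * s⁻¹) = a t) (ψ : K → ℂ) :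
    cfInner Γ a (indHom φ ψ) = cfInner K (a ∘ φ) ψ := by
  have hcΓ : ((Fintype.card Γ : ℂ)) ≠ 0 := Nat.cast_ne_zero.mpr Fintype.card_ne_zero
  rw [cfInner, cfInner]
  have h1 : ∀ g : Γ, a g * (starRingEnd ℂ) (indHom φ ψ g)
      = (Fintype.card K : ℂ)⁻¹ * ∑ x : Γ, ∑ y : K,
          if φ y = x⁻¹ * g * x then a g * (starRingEnd ℂ) (ψ y) else 0 := by
    intro g
    rw [indHom, map_mul, map_inv₀, map_natCast, map_sum]
    rw [← mul_assoc, mul_comm (a g) ((Fintype.card K : ℂ))⁻¹, mul_assoc]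
    congr 1
    rw [Finset.mul_sum]
    refine Finset.sum_congr rfl fun x _ => ?_
    rw [map_sum, Finset.mul_sum]
    refine Finset.sum_congr rfl fun y _ => ?_
    rw [apply_ite (starRingEnd ℂ), map_zero, mul_ite, mul_zero]
  rw [Finset.sum_congr rfl fun g _ => h1 g, ← Finset.mul_sum, Finset.sum_comm]
  have h2 : ∀ x : Γ, (∑ g : Γ, ∑ y : K, if φ y = x⁻¹ * g * x then
      a g * (starRingEnd ℂ) (ψ y) else 0) = ∑ y : K, a (φ y) * (starRingEnd ℂ) (ψ y) := by
    intro x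
    have h3 : ∀ g : Γ, (∑ y : K, if φ y = x⁻¹ * (x * g * x⁻¹) * x then
        a (x * g * x⁻¹) * (starRingEnd ℂ) (ψ y) else 0)
        = ∑ y : K, if φ y = g then a g * (starRingEnd ℂ) (ψ y) else 0 := by
      intro g
      refine Finset.sum_congr rfl fun y _ => ?_
      have e1 : x⁻¹ * (x * g * x⁻¹) * x = g := by group
      rw [e1, ha x g]
    rw [← Fintype.sum_equiv ((MulAut.conj x).toEquiv) _ _ (fun g => (h3 g).symm)]
    · rw [Finset.sum_comm]
      refine Finset.sum_congr rfl fun y _ => ?_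
      have : ∀ g : Γ, (if φ y = g then a g * (starRingEnd ℂ) (ψ y) else 0)
          = if g = φ y then a (φ y) * (starRingEnd ℂ) (ψ y) else 0 := by
        intro g
        by_cases h : g = φ y
        · subst h; simp
        · rw [if_neg h, if_neg (fun hh => h hh.symm)]
      rw [Finset.sum_congr rfl fun g _ => this g,
        Finset.sum_ite_eq' Finset.univ (φ y) (fun _ => a (φ y) * (starRingEnd ℂ) (ψ y)),
        if_pos (Finset.mem_univ _)]
  rw [Finset.sum_congr rfl fun x _ => h2 x, Finset.sum_const, Finset.card_univ,
    nsmul_eq_mul]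
  simp only [Function.comp_apply]
  field_simp

/-- inner products on a product group factor on product functions -/
private lemma boxInner {G₁ G₂ : Type} [Group G₁] [Fintype G₁] [Group G₂] [Fintype G₂]
    (u₁ v₁ : G₁ → ℂ) (u₂ v₂ : G₂ → ℂ) :
    cfInner (G₁ × G₂) (fun q => u₁ q.1 * u₂ q.2) (fun q => v₁ q.1 * v₂ q.2)
      = cfInner G₁ u₁ v₁ * cfInner G₂ u₂ v₂ := by
  rw [cfInner, cfInner, cfInner, Fintype.sum_prod_type]
  have h1 : ∀ (g₁ : G₁) (g₂ : G₂), u₁ g₁ * u₂ g₂ * (starRingEnd ℂ) (v₁ g₁ * v₂ g₂)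
      = (u₁ g₁ * (starRingEnd ℂ) (v₁ g₁)) * (u₂ g₂ * (starRingEnd ℂ) (v₂ g₂)) := by
    intro g₁ g₂; rw [map_mul]; ring
  calc (Fintype.card (G₁ × G₂) : ℂ)⁻¹ * ∑ g₁ : G₁, ∑ g₂ : G₂,
        u₁ g₁ * u₂ g₂ * (starRingEnd ℂ) (v₁ g₁ * v₂ g₂)
      = (Fintype.card (G₁ × G₂) : ℂ)⁻¹ * ∑ g₁ : G₁, (u₁ g₁ * (starRingEnd ℂ) (v₁ g₁))
          * ∑ g₂ : G₂, (u₂ g₂ * (starRingEnd ℂ) (v₂ g₂)) := by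
        congr 1
        refine Finset.sum_congr rfl fun g₁ _ => ?_
        rw [Finset.mul_sum]
        exact Finset.sum_congr rfl fun g₂ _ => h1 g₁ g₂
    _ = _ := by
        rw [← Finset.sum_mul, Fintype.card_prod, Nat.cast_mul, mul_inv]
        ring

private lemma cfInner_sub_left {Γ : Type} [Group Γ] [Fintype Γ] (u w v : Γ → ℂ) :
    cfInner Γ (fun x => u x - w x) v = cfInner Γ u v - cfInner Γ w v := by
  rw [cfInner, cfInner, cfInner, ← mul_sub, ← Finset.sum_sub_distrib]
  congr 1
  exact Finset.sum_congr rfl fun g _ => by ring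

private lemma cfInner_sum_left {Γ : Type} [Group Γ] [Fintype Γ] {ι : Type} (s : Finset ι)
    (u : ι → Γ → ℂ) (v : Γ → ℂ) :
    cfInner Γ (fun x => ∑ i ∈ s, u i x) v = ∑ i ∈ s, cfInner Γ (u i) v := by
  simp only [cfInner]
  rw [← Finset.mul_sum]
  congr 1
  rw [Finset.sum_comm]
  exact Finset.sum_congr rfl fun g _ => Finset.sum_mul s (fun i => u i g) _

private lemma cfInner_const_mul_left {Γ : Type} [Group Γ] [Fintype Γ] (t : ℂ) (u v : Γ → ℂ) :
    cfInner Γ (fun x => t * u x) v = t * cfInner Γ u v := by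
  rw [cfInner, cfInner]
  rw [show (∑ g : Γ, t * u g * (starRingEnd ℂ) (v g))
      = t * ∑ g : Γ, u g * (starRingEnd ℂ) (v g) by
    rw [Finset.mul_sum]; exact Finset.sum_congr rfl fun g _ => by ring]
  ring



private lemma product_completeness {G₁ G₂ : Type} [Group G₁] [Fintype G₁] [Group G₂] [Fintype G₂]
    (F : G₁ × G₂ → ℂ)
    (hcl : ∀ s t : G₁ × G₂, F (s * t * s⁻¹) = F t)
    (horth : ∀ (b : G₁ → ℂ) (c : G₂ → ℂ), IsIrrChar G₁ b → IsIrrChar G₂ c →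
      cfInner (G₁ × G₂) F (fun r => b r.1 * c r.2) = 0) : F = 0 := by
  have hc1 : ((Fintype.card G₁ : ℂ)) ≠ 0 := Nat.cast_ne_zero.mpr Fintype.card_ne_zero
  have hc2 : ((Fintype.card G₂ : ℂ)) ≠ 0 := Nat.cast_ne_zero.mpr Fintype.card_ne_zero
  have step1 : ∀ c : G₂ → ℂ, IsIrrChar G₂ c →
      (fun g₁ : G₁ => ∑ g₂ : G₂, F (g₁, g₂) * (starRingEnd ℂ) (c g₂)) = 0 := by
    intro c hc
    apply completeness
    · intro s t
      refine Finset.sum_congr rfl fun g₂ _ => ?_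
      have h1 : ((s, (1 : G₂)) * (t, g₂) * ((s, (1 : G₂)))⁻¹ : G₁ × G₂)
          = (s * t * s⁻¹, g₂) := by
        simp [Prod.ext_iff]
      rw [← h1, hcl]
    · intro b hb
      have key : cfInner G₁ (fun g₁ => ∑ g₂ : G₂, F (g₁, g₂) * (starRingEnd ℂ) (c g₂)) b
          = (Fintype.card G₂ : ℂ) * cfInner (G₁ × G₂) F (fun r => b r.1 * c r.2) := by
        rw [cfInner, cfInner, Fintype.sum_prod_type, Fintype.card_prod, Nat.cast_mul,
          mul_inv]
        have h2 : ∀ g₁ : G₁, (∑ g₂ : G₂, F (g₁, g₂) * (starRingEnd ℂ) (c g₂))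
            * (starRingEnd ℂ) (b g₁)
            = ∑ g₂ : G₂, F (g₁, g₂) * (starRingEnd ℂ) (b g₁ * c g₂) := by
          intro g₁
          rw [Finset.sum_mul]
          refine Finset.sum_congr rfl fun g₂ _ => ?_
          rw [map_mul]; ring
        rw [Finset.sum_congr rfl fun g₁ _ => h2 g₁]
        field_simp
      rw [key, horth b c hb hc, mul_zero]
  funext r
  obtain ⟨g₁, g₂⟩ := r
  have step2 : (fun g₂ : G₂ => F (g₁, g₂)) = 0 := by
    apply completeness
    · intro s t
      have h1 : (((1 : G₁), s) * (g₁, t) * (((1 : G₁), s))⁻¹ : G₁ × G₂)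
          = (g₁, s * t * s⁻¹) := by
        simp [Prod.ext_iff]
      rw [← h1, hcl]
    · intro c hc
      have h3 := congrFun (step1 c hc) g₁
      simp only [Pi.zero_apply] at h3
      rw [cfInner, h3, mul_zero]
  exact congrFun step2 g₂

set_option maxHeartbeats 2000000 in
private lemma expansion {G₁ G₂ : Type} [Group G₁] [Fintype G₁] [Group G₂] [Fintype G₂]
    (B₁ : Finset (G₁ → ℂ)) (B₂ : Finset (G₂ → ℂ))
    (hB₁ : ∀ χ, χ ∈ B₁ ↔ IsIrrChar G₁ χ) (hB₂ : ∀ χ, χ ∈ B₂ ↔ IsIrrChar G₂ χ)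
    (f : G₁ × G₂ → ℂ) (hcl : ∀ s t : G₁ × G₂, f (s * t * s⁻¹) = f t) :
    ∀ q, f q = ∑ b ∈ B₁, ∑ c ∈ B₂,
      cfInner (G₁ × G₂) f (fun r => b r.1 * c r.2) * (b q.1 * c q.2) := by
  set co : (G₁ → ℂ) → (G₂ → ℂ) → ℂ :=
    fun b c => cfInner (G₁ × G₂) f (fun r => b r.1 * c r.2) with hco
  suffices h : (fun r => f r - ∑ b ∈ B₁, ∑ c ∈ B₂, co b c * (b r.1 * c r.2)) = 0 by
    intro q
    have := congrFun h q
    simp only [Pi.zero_apply, sub_eq_zero] at this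
    exact this
  apply product_completeness
  · intro s t
    rw [hcl]
    congr 1
    refine Finset.sum_congr rfl fun b hb => Finset.sum_congr rfl fun c hc => ?_
    have hbt : ∀ s₁ t₁ : G₁, b (s₁ * t₁ * s₁⁻¹) = b t₁ :=
      irrChar_conj b ((hB₁ b).mp hb)
    have hct : ∀ s₂ t₂ : G₂, c (s₂ * t₂ * s₂⁻¹) = c t₂ :=
      irrChar_conj c ((hB₂ c).mp hc)
    have h1 : (s * t * s⁻¹).1 = s.1 * t.1 * s.1⁻¹ := rfl
    have h2 : (s * t * s⁻¹).2 = s.2 * t.2 * s.2⁻¹ := rfl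
    rw [h1, h2, hbt, hct]
  · intro b' c' hb' hc'
    rw [cfInner_sub_left]
    have e1 : cfInner (G₁ × G₂) (fun r => ∑ b ∈ B₁, ∑ c ∈ B₂, co b c * (b r.1 * c r.2))
        (fun r => b' r.1 * c' r.2)
        = ∑ b ∈ B₁, cfInner (G₁ × G₂) (fun r => ∑ c ∈ B₂, co b c * (b r.1 * c r.2))
            (fun r => b' r.1 * c' r.2) :=
      cfInner_sum_left (Γ := G₁ × G₂) (ι := G₁ → ℂ) B₁
        (fun b r => ∑ c ∈ B₂, co b c * (b r.1 * c r.2)) (fun r => b' r.1 * c' r.2)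
    rw [e1]
    have h3 : ∀ b ∈ B₁, cfInner (G₁ × G₂) (fun r => ∑ c ∈ B₂, co b c * (b r.1 * c r.2))
        (fun r => b' r.1 * c' r.2)
        = ∑ c ∈ B₂, co b c * (cfInner G₁ b b' * cfInner G₂ c c') := by
      intro b _
      have e2 : cfInner (G₁ × G₂) (fun r => ∑ c ∈ B₂, co b c * (b r.1 * c r.2))
          (fun r => b' r.1 * c' r.2)
          = ∑ c ∈ B₂, cfInner (G₁ × G₂) (fun r => co b c * (b r.1 * c r.2))
              (fun r => b' r.1 * c' r.2) :=
        cfInner_sum_left (Γ := G₁ × G₂) (ι := G₂ → ℂ) B₂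
          (fun c r => co b c * (b r.1 * c r.2)) (fun r => b' r.1 * c' r.2)
      rw [e2]
      refine Finset.sum_congr rfl fun c _ => ?_
      have e3 : cfInner (G₁ × G₂) (fun r => co b c * (b r.1 * c r.2))
          (fun r => b' r.1 * c' r.2)
          = co b c * cfInner (G₁ × G₂) (fun r => b r.1 * c r.2)
              (fun r => b' r.1 * c' r.2) :=
        cfInner_const_mul_left (Γ := G₁ × G₂) (co b c) (fun r => b r.1 * c r.2)
          (fun r => b' r.1 * c' r.2)
      rw [e3, boxInner]
    rw [Finset.sum_congr rfl h3]
    have h4 : ∀ b ∈ B₁, (∑ c ∈ B₂, co b c * (cfInner G₁ b b' * cfInner G₂ c c'))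
        = if b = b' then co b c' else 0 := by
      intro b hb
      have h5 : ∀ c ∈ B₂, co b c * (cfInner G₁ b b' * cfInner G₂ c c')
          = if c = c' then (if b = b' then co b c else 0) else 0 := by
        intro c hc
        rw [irr_inner b b' ((hB₁ b).mp hb) hb', irr_inner c c' ((hB₂ c).mp hc) hc']
        by_cases h6 : b = b' <;> by_cases h7 : c = c' <;> simp [h6, h7]
      rw [Finset.sum_congr rfl h5, Finset.sum_ite_eq' B₂ c'
        (fun c => if b = b' then co b c else 0), if_pos ((hB₂ c').mpr hc')]
    rw [Finset.sum_congr rfl h4, Finset.sum_ite_eq' B₁ b' (fun b => co b c'),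
      if_pos ((hB₁ b').mpr hb'), sub_self]



/-- Let `H` be a finite abelian group, `k ≥ 1`, `0 ≤ j ≤ k`, and let `a`
be an irreducible character of `S_k`.  Then the restriction to `H_j × H_{k−j}` of the
class function `ζ_a` on `H_k = H ≀ S_k` decomposes as
`Res^{H_k}_{H_j × H_{k−j}}(ζ_a) = ∑_{b ∈ Irr(S_j)} ∑_{c ∈ Irr(S_{k−j})} c^a_{b,c} ⬝ (ζ_b ⊠ ζ_c)`,
where `c^a_{b,c} = ⟨a, Ind_{S_j × S_{k−j}}^{S_k}(b ⊠ c)⟩` is the Littlewood–Richardson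
coefficient.  (The subgroups `H_j × H_{k−j} ≤ H_k` and `S_j × S_{k−j} ≤ S_k` are
realised via the identification `E` of `Fin k` with the two consecutive blocks of sizes
`j`, `k − j`; `B m` is the set of irreducible characters of `S_m`.) -/
theorem statement14 (H : Type) [CommGroup H] [Fintype H] (k j : ℕ) (hk : 1 ≤ k)
    (hj : j ≤ k)
    (a : Equiv.Perm (Fin k) → ℂ) (ha : IsIrrChar (Equiv.Perm (Fin k)) a)
    (B : ∀ m : ℕ, Finset (Equiv.Perm (Fin m) → ℂ))
    (hB : ∀ (m : ℕ) (χ : Equiv.Perm (Fin m) → ℂ),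
      χ ∈ B m ↔ IsIrrChar (Equiv.Perm (Fin m)) χ)
    (E : Fin j ⊕ Fin (k - j) ≃ Fin k)
    (hEl : ∀ s : Fin j, (E (Sum.inl s) : ℕ) = (s : ℕ))
    (hEr : ∀ t : Fin (k - j), (E (Sum.inr t) : ℕ) = j + (t : ℕ)) :
    (fun x : Wr H j × Wr H (k - j) => permCF a (wrSumEmb E x)) =
      fun x : Wr H j × Wr H (k - j) =>
        ∑ b ∈ B j, ∑ c ∈ B (k - j),
          cfInner (Equiv.Perm (Fin k)) a
              (indHom (permSumEmb E) fun q => b q.1 * c q.2) *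
            (permCF b x.1 * permCF c x.2) := by
  funext x
  obtain ⟨V, hV, haV⟩ := ha
  have hacl : ∀ s t : Equiv.Perm (Fin k), a (s * t * s⁻¹) = a t := by
    intro s t
    rw [haV]
    exact FDRep.char_conj V t s
  have hfcl : ∀ s t : Equiv.Perm (Fin j) × Equiv.Perm (Fin (k - j)),
      (a ∘ (permSumEmb E)) (s * t * s⁻¹) = (a ∘ (permSumEmb E)) t := by
    intro s t
    simp only [Function.comp_apply, map_mul, map_inv]
    exact hacl _ _
  have hexp := expansion (B j) (B (k - j)) (hB j) (hB (k - j))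
    (a ∘ (permSumEmb E)) hfcl (x.1.right, x.2.right)
  calc permCF a (wrSumEmb E x)
      = (a ∘ (permSumEmb E)) (x.1.right, x.2.right) := rfl
    _ = ∑ b ∈ B j, ∑ c ∈ B (k - j),
        cfInner (Equiv.Perm (Fin j) × Equiv.Perm (Fin (k - j))) (a ∘ (permSumEmb E))
          (fun r => b r.1 * c r.2) * (b x.1.right * c x.2.right) := hexp
    _ = _ := by
        refine Finset.sum_congr rfl fun b _ => Finset.sum_congr rfl fun c _ => ?_
        rw [← frobenius (permSumEmb E) a hacl (fun q => b q.1 * c q.2)]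
        rfl

end BrGrFormal
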